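/- For every α > 0 and all real numbers x, y, c, the derivative with respect to y of the function y ↦ exp(−((y − x)/√α)²) equals the sum of the convergent series with n-th term (2/(√α · n!)) · [ ((y − c)/√α)ⁿ · ((x − c)/√α) · h_n((x − c)/√α) − ((y − c)/√α)^{n+1} · h_n((x − c)/√α) ]. (This is the Hermite expansion of the source-point gradient of the Gaussian kernel, the extra expansion derived by the paper to evaluate the Jacobian ∂G^d/∂θ within the Fast Gauss Transform M2M step.) -/

import Mathlib

open Real

/-- The Hermite function `h_n(t) = (−1)ⁿ · (dⁿ/dtⁿ) exp(−t²)`. -/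
noncomputable def hermiteFun (n : ℕ) (t : ℝ) : ℝ :=
  (-1) ^ n * iteratedDeriv n (fun s : ℝ => Real.exp (-s ^ 2)) t

/-- Auxiliary polynomials: `P n` such that the `n`-th derivative of `exp(-t²)` is
`(P n)(t) · exp(-t²)`. -/
noncomputable def gaussPoly : ℕ → Polynomial ℤ
  | 0 => 1
  | n + 1 => Polynomial.derivative (gaussPoly n) - 2 * Polynomial.X * gaussPoly n

open Polynomial in
lemma iteratedDeriv_gauss_real (n : ℕ) :
    iteratedDeriv n (fun t : ℝ => Real.exp (-t ^ 2)) =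
      fun t : ℝ => (aeval t (gaussPoly n)) * Real.exp (-t ^ 2) := by
  induction n with
  | zero => simp [gaussPoly]
  | succ n ih =>
    funext t
    rw [iteratedDeriv_succ, ih]
    have h1 : HasDerivAt (fun t : ℝ => aeval t (gaussPoly n))
        (aeval t (Polynomial.derivative (gaussPoly n))) t :=
      (gaussPoly n).hasDerivAt_aeval t
    have h2 : HasDerivAt (fun t : ℝ => Real.exp (-t ^ 2))
        (Real.exp (-t ^ 2) * -(2 * t)) t := by
      simpa using ((hasDerivAt_pow 2 t).neg).exp
    have h12 : HasDerivAt (fun t : ℝ => aeval t (gaussPoly n) * Real.exp (-t ^ 2))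
        (aeval t (Polynomial.derivative (gaussPoly n)) * Real.exp (-t ^ 2) +
          aeval t (gaussPoly n) * (Real.exp (-t ^ 2) * -(2 * t))) t := h1.mul h2
    rw [h12.deriv, gaussPoly]
    simp only [map_sub, map_mul, map_ofNat, aeval_X]
    ring

open Polynomial in
/-- Iterated derivatives of the shifted complex Gaussian `z ↦ exp(-(s-z)²)`. -/
lemma iteratedDeriv_gauss_shift (n : ℕ) (s : ℂ) :
    iteratedDeriv n (fun z : ℂ => Complex.exp (-(s - z) ^ 2)) =
      fun z : ℂ => (-1 : ℂ) ^ n * (aeval (s - z) (gaussPoly n)) *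
        Complex.exp (-(s - z) ^ 2) := by
  induction n with
  | zero => simp [gaussPoly]
  | succ n ih =>
    funext z
    rw [iteratedDeriv_succ, ih]
    have hinner : HasDerivAt (fun z : ℂ => s - z) (-1) z := by
      simpa using (hasDerivAt_id z).const_sub s
    have h1 : HasDerivAt (fun z : ℂ => aeval (s - z) (gaussPoly n))
        (aeval (s - z) (Polynomial.derivative (gaussPoly n)) * -1) z :=
      ((gaussPoly n).hasDerivAt_aeval (s - z)).comp z hinner
    have h2 : HasDerivAt (fun z : ℂ => Complex.exp (-(s - z) ^ 2))
        (Complex.exp (-(s - z) ^ 2) * (2 * (s - z))) z := by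
      have := ((hinner.pow 2).neg).cexp
      refine this.congr_deriv ?_
      simp only [Pi.neg_apply, Pi.pow_apply]
      ring
    have h3 : HasDerivAt (fun z : ℂ => (-1 : ℂ) ^ n * (aeval (s - z) (gaussPoly n)) *
        Complex.exp (-(s - z) ^ 2))
        ((-1 : ℂ) ^ n * (aeval (s - z) (Polynomial.derivative (gaussPoly n)) * -1) *
            Complex.exp (-(s - z) ^ 2) +
          (-1 : ℂ) ^ n * (aeval (s - z) (gaussPoly n)) *
            (Complex.exp (-(s - z) ^ 2) * (2 * (s - z)))) z :=
      (h1.const_mul ((-1 : ℂ) ^ n)).mul h2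
    rw [h3.deriv, gaussPoly]
    simp only [map_sub, map_mul, map_ofNat, aeval_X]
    ring

open Polynomial in
lemma aeval_gaussPoly_ofReal (p : Polynomial ℤ) (s : ℝ) :
    aeval ((s : ℂ)) p = ((aeval s p : ℝ) : ℂ) := by
  rw [show ((s : ℝ) : ℂ) = algebraMap ℝ ℂ s from rfl, aeval_algebraMap_apply]
  rfl

/-- The Hermite generating-function expansion:
`exp(-(s-u)²) = ∑ uⁿ/n! · hₙ(s)`, with convergence. -/
lemma gauss_hasSum (s u : ℝ) :
    HasSum (fun n : ℕ => u ^ n / (n.factorial : ℝ) * hermiteFun n s)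
      (Real.exp (-(s - u) ^ 2)) := by
  have hF : Differentiable ℂ (fun z : ℂ => Complex.exp (-((s : ℂ) - z) ^ 2)) := by
    apply Complex.differentiable_exp.comp
    exact (((differentiable_const _).sub differentiable_id).pow 2).neg
  have H := Complex.hasSum_taylorSeries_of_entire hF 0 (u : ℂ)
  rw [← Complex.hasSum_ofReal (f := fun n : ℕ => u ^ n / (n.factorial : ℝ) * hermiteFun n s)]
  have hterm : (fun n : ℕ => ((u ^ n / (n.factorial : ℝ) * hermiteFun n s : ℝ) : ℂ)) =
      fun n : ℕ => (n.factorial : ℂ)⁻¹ • ((u : ℂ) - 0) ^ n •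
        iteratedDeriv n (fun z : ℂ => Complex.exp (-((s : ℂ) - z) ^ 2)) 0 := by
    funext n
    rw [congrFun (iteratedDeriv_gauss_shift n (s : ℂ)) 0]
    simp only [sub_zero]
    rw [aeval_gaussPoly_ofReal, hermiteFun, congrFun (iteratedDeriv_gauss_real n) s]
    have hfac : ((n.factorial : ℝ) : ℂ) ≠ 0 := by
      exact_mod_cast Nat.cast_ne_zero.mpr n.factorial_ne_zero
    rw [smul_eq_mul, smul_eq_mul]
    push_cast [Complex.ofReal_exp]
    field_simp
  have hval : ((Real.exp (-(s - u) ^ 2) : ℝ) : ℂ) =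
      Complex.exp (-((s : ℂ) - (u : ℂ)) ^ 2) := by
    push_cast [Complex.ofReal_exp]
    ring_nf
  rw [hterm, hval]
  exact H

theorem hermite_expansion_m2m_gradient (α : ℝ) (hα : 0 < α) (x y c : ℝ) :
    ∃ S : ℝ,
      HasSum (fun n : ℕ =>
          (2 / (Real.sqrt α * (n.factorial : ℝ))) *
            (((y - c) / Real.sqrt α) ^ n * ((x - c) / Real.sqrt α) *
                hermiteFun n ((x - c) / Real.sqrt α) -
              ((y - c) / Real.sqrt α) ^ (n + 1) *
                hermiteFun n ((x - c) / Real.sqrt α))) S ∧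
      HasDerivAt (fun y' : ℝ => Real.exp (-((y' - x) / Real.sqrt α) ^ 2)) S y := by
  have hs : (0 : ℝ) < Real.sqrt α := Real.sqrt_pos.mpr hα
  set s := (x - c) / Real.sqrt α with hsdef
  set u := (y - c) / Real.sqrt α with hudef
  have hw : (y - x) / Real.sqrt α = u - s := by
    rw [hudef, hsdef]; field_simp
    ring
  refine ⟨2 / Real.sqrt α * (s - u) * Real.exp (-(s - u) ^ 2), ?_, ?_⟩
  · have := (gauss_hasSum s u).mul_left (2 / Real.sqrt α * (s - u))
    convert this using 2 with n
    · rfl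
    have hfac : (n.factorial : ℝ) ≠ 0 := Nat.cast_ne_zero.mpr n.factorial_ne_zero
    field_simp
    ring
  · have h1 : HasDerivAt (fun y' : ℝ => (y' - x) / Real.sqrt α) (1 / Real.sqrt α) y := by
      simpa using ((hasDerivAt_id y).sub_const x).div_const (Real.sqrt α)
    have h2 := ((h1.pow 2).neg).exp
    convert h2 using 1
    · rfl
    simp only [Pi.neg_apply, Pi.pow_apply]
    rw [hw]
    ring_nf
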